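/- Let (M,d) be a metric space (not necessarily connected or locally compact). Then the group Iso(M,d) of surjective distance-preserving self-maps of M, endowed with the topology of pointwise convergence and with composition as group operation, is a topological group, and the evaluation map (f,p) ↦ f(p) from Iso(M,d) × M to M is jointly continuous. -/

import Mathlib

/-- for any metric space `M` (not necessarily connected or
locally compact), the group of isometries of `M` (surjective distance
preserving self-maps, i.e. self isometry-equivalences), with the topology of
pointwise convergence and composition as group law, is a topological group,
and the evaluation map is jointly continuous. -/
theorem statement7 (M : Type*) [MetricSpace M] :
    letI : TopologicalSpace (M ≃ᵢ M) :=
      TopologicalSpace.induced (fun f : M ≃ᵢ M => (⇑f : M → M)) Pi.topologicalSpace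
    IsTopologicalGroup (M ≃ᵢ M) ∧
      Continuous fun p : (M ≃ᵢ M) × M => p.1 p.2 := by
  letI : TopologicalSpace (M ≃ᵢ M) :=
    TopologicalSpace.induced (fun f : M ≃ᵢ M => (⇑f : M → M)) Pi.topologicalSpace
  have hcoe : Continuous fun f : M ≃ᵢ M => (⇑f : M → M) := continuous_induced_dom
  have happ : ∀ x : M, Continuous fun f : M ≃ᵢ M => f x := fun x =>
    (continuous_apply x).comp hcoe
  -- joint continuity of evaluation
  have hev : Continuous fun p : (M ≃ᵢ M) × M => p.1 p.2 := by
    rw [continuous_iff_continuousAt]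
    rintro ⟨f₀, p₀⟩
    rw [ContinuousAt, Metric.tendsto_nhds]
    intro ε hε
    have h1 : Filter.Tendsto (fun q : (M ≃ᵢ M) × M => dist q.2 p₀) (nhds (f₀, p₀)) (nhds 0) := by
      have hc : Continuous fun q : (M ≃ᵢ M) × M => dist q.2 p₀ :=
        continuous_snd.dist continuous_const
      simpa using hc.tendsto (f₀, p₀)
    have h2 : Filter.Tendsto (fun q : (M ≃ᵢ M) × M => dist (q.1 p₀) (f₀ p₀))
        (nhds (f₀, p₀)) (nhds 0) := by
      have hc : Continuous fun q : (M ≃ᵢ M) × M => dist (q.1 p₀) (f₀ p₀) :=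
        ((happ p₀).comp continuous_fst).dist continuous_const
      simpa using hc.tendsto (f₀, p₀)
    filter_upwards [h1.eventually (eventually_lt_nhds (half_pos hε)),
      h2.eventually (eventually_lt_nhds (half_pos hε))] with q hq1 hq2
    calc dist (q.1 q.2) (f₀ p₀) ≤ dist (q.1 q.2) (q.1 p₀) + dist (q.1 p₀) (f₀ p₀) :=
          dist_triangle _ _ _
      _ = dist q.2 p₀ + dist (q.1 p₀) (f₀ p₀) := by rw [q.1.dist_eq]
      _ < ε / 2 + ε / 2 := add_lt_add hq1 hq2
      _ = ε := add_halves ε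
  refine ⟨?_, hev⟩
  have hmul : Continuous fun p : (M ≃ᵢ M) × (M ≃ᵢ M) => p.1 * p.2 := by
    rw [continuous_induced_rng]
    apply continuous_pi
    intro x
    exact hev.comp (continuous_fst.prodMk ((happ x).comp continuous_snd))
  have hinv : Continuous fun f : M ≃ᵢ M => f⁻¹ := by
    rw [continuous_induced_rng]
    apply continuous_pi
    intro x
    rw [continuous_iff_continuousAt]
    intro f₀
    rw [ContinuousAt, Metric.tendsto_nhds]
    intro ε hε
    have h1 : Filter.Tendsto (fun f : M ≃ᵢ M => dist (f (f₀⁻¹ x)) x) (nhds f₀) (nhds 0) := by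
      have hc : Continuous fun f : M ≃ᵢ M => dist (f (f₀⁻¹ x)) x :=
        (happ _).dist continuous_const
      have := hc.tendsto f₀
      simpa using this
    filter_upwards [h1.eventually (eventually_lt_nhds hε)] with f hf
    have key : dist (f⁻¹ x) (f₀⁻¹ x) = dist (f (f₀⁻¹ x)) x := by
      rw [← f.dist_eq (f⁻¹ x) (f₀⁻¹ x)]
      simp [dist_comm, IsometryEquiv.mul_apply]
    show dist (f⁻¹ x) (f₀⁻¹ x) < ε
    rw [key]
    exact hf
  exact { toContinuousMul := ⟨hmul⟩, toContinuousInv := ⟨hinv⟩ }
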